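/- Let N be a positive integer and χ: ℤ → ℂ a function of period N with ∑_{k=1}^{N} χ(k) = 0. Then the Cesàro limit of the partial sums of ∑ χ(i) exists and equals -(1/N) ∑_{k=1}^{N} k·χ(k); that is, lim_{l→∞} (1/l) ∑_{k=1}^{l} (l+1-k)·χ(k) = -(1/N) ∑_{k=1}^{N} k·χ(k). -/

import Mathlib

open Filter Finset

/-- Cesàro limit of partial sums of a periodic series with vanishing period sum. -/
theorem cesaro_limit_periodic_sum (N : ℕ) (hN : 0 < N) (χ : ℤ → ℂ)
    (hper : ∀ j : ℤ, χ (j + N) = χ j)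
    (hsum : ∑ k ∈ Finset.range N, χ (k + 1) = 0) :
    Tendsto (fun l : ℕ => (1 / (l : ℂ)) *
        ∑ k ∈ Finset.range l, ((l : ℂ) + 1 - ((k : ℂ) + 1)) * χ (k + 1))
      atTop
      (nhds (-(1 / (N : ℂ)) * ∑ k ∈ Finset.range N, ((k : ℂ) + 1) * χ (k + 1))) := by
  set g : ℤ → ℂ := fun m => ∑ k ∈ Finset.range N, χ (m + k) with hg
  have gstep : ∀ m : ℤ, g (m + 1) = g m := by
    intro m
    have e1 : g (m + 1) = ∑ k ∈ Finset.range N, χ (m + ((k : ℤ) + 1)) :=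
      Finset.sum_congr rfl (fun k _ => by congr 1; ring)
    have e2 : ∑ k ∈ Finset.range (N + 1), χ (m + (k : ℤ))
        = ∑ k ∈ Finset.range N, χ (m + ((k : ℤ) + 1)) + χ (m + ((0 : ℕ) : ℤ)) := by
      rw [Finset.sum_range_succ' (fun k : ℕ => χ (m + (k : ℤ))) N]
      congr 1
    have e3 := Finset.sum_range_succ (fun k : ℕ => χ (m + (k : ℤ))) N
    have e4 : χ (m + (N : ℤ)) = χ (m + ((0 : ℕ) : ℤ)) := by rw [hper m]; norm_num
    have h5 : ∑ k ∈ Finset.range N, χ (m + ((k : ℤ) + 1)) + χ (m + ((0 : ℕ) : ℤ))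
        = g m + χ (m + ((0 : ℕ) : ℤ)) := by rw [← e2, e3, e4]
    rw [e1]
    exact add_right_cancel h5
  have gconst : ∀ m : ℤ, g m = g 0 := by
    intro m
    induction m using Int.induction_on with
    | zero => rfl
    | succ n ih => rw [show ((n : ℤ) + 1) = (n : ℤ) + 1 from rfl, gstep]; exact ih
    | pred n ih =>
      have h := gstep (-(n : ℤ) - 1)
      rw [show (-(n : ℤ) - 1 + 1) = -(n : ℤ) by ring] at h
      exact h.symm.trans ih
  have g1 : g 1 = 0 := by
    rw [← hsum]
    apply Finset.sum_congr rfl; intro k _; congr 1; ring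
  have gzero : ∀ m : ℤ, g m = 0 := fun m => (gconst m).trans ((gconst 1).symm.trans g1)
  set S : ℕ → ℂ := fun j => ∑ k ∈ Finset.range j, χ ((k : ℤ) + 1) with hSdef
  have Sper : ∀ j : ℕ, S (j + N) = S j := by
    intro j
    have h1 : S (j + N) = S j + ∑ k ∈ Finset.range N, χ (((j + k : ℕ) : ℤ) + 1) :=
      Finset.sum_range_add (fun k : ℕ => χ ((k : ℤ) + 1)) j N
    have h2 : ∑ k ∈ Finset.range N, χ (((j + k : ℕ) : ℤ) + 1) = g ((j : ℤ) + 1) := by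
      apply Finset.sum_congr rfl; intro k _; congr 1; push_cast; ring
    rw [h1, h2, gzero, add_zero]
  set T : ℂ := ∑ j ∈ Finset.range N, S j with hT
  have hconsec : ∀ m : ℕ, ∑ j ∈ Finset.range N, S (m + j) = T := by
    intro m
    induction m with
    | zero => simp [hT]
    | succ m ih =>
      rw [← ih]
      have e2 : ∑ j ∈ Finset.range (N + 1), S (m + j)
          = ∑ j ∈ Finset.range N, S (m + (j + 1)) + S (m + 0) :=
        Finset.sum_range_succ' (fun j => S (m + j)) N
      have e3 : ∑ j ∈ Finset.range (N + 1), S (m + j)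
          = ∑ j ∈ Finset.range N, S (m + j) + S (m + N) := Finset.sum_range_succ _ N
      have e4 : S (m + N) = S (m + 0) := by rw [Nat.add_zero]; exact Sper m
      have h5 : ∑ j ∈ Finset.range N, S (m + (j + 1)) + S (m + 0)
          = ∑ j ∈ Finset.range N, S (m + j) + S (m + 0) := by rw [← e2, e3, e4]
      have h6 := add_right_cancel h5
      calc ∑ j ∈ Finset.range N, S (m + 1 + j)
          = ∑ j ∈ Finset.range N, S (m + (j + 1)) := by
            apply Finset.sum_congr rfl; intro j _; congr 1; omega
        _ = ∑ j ∈ Finset.range N, S (m + j) := h6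
  set B : ℕ → ℂ := fun l => ∑ j ∈ Finset.range l, S (j + 1) with hB
  have hA : ∀ l : ℕ, ∑ k ∈ Finset.range l, ((l : ℂ) + 1 - ((k : ℂ) + 1)) * χ ((k : ℤ) + 1) = B l := by
    intro l
    induction l with
    | zero => simp [hB]
    | succ l ih =>
      have e1 : ∑ k ∈ Finset.range (l+1), (((l : ℂ) + 1) + 1 - ((k : ℂ) + 1)) * χ ((k : ℤ) + 1)
          = ∑ k ∈ Finset.range (l+1), (((l : ℂ) + 1 - ((k : ℂ) + 1)) * χ ((k:ℤ)+1) + χ ((k:ℤ)+1)) :=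
        Finset.sum_congr rfl (fun k _ => by ring)
      have eB : B (l + 1) = B l + S (l + 1) := Finset.sum_range_succ _ l
      have eS : S (l + 1) = ∑ k ∈ Finset.range (l+1), χ ((k : ℤ) + 1) := rfl
      push_cast
      rw [e1, Finset.sum_add_distrib,
        Finset.sum_range_succ (fun k : ℕ => ((l : ℂ) + 1 - ((k : ℂ) + 1)) * χ ((k : ℤ) + 1)) l,
        ih, eB, eS]
      ring
  have hNC : (N : ℂ) ≠ 0 := Nat.cast_ne_zero.mpr hN.ne'
  have hTval : T = -∑ k ∈ Finset.range N, ((k : ℂ) + 1) * χ ((k : ℤ) + 1) := by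
    have h1 : T = B N := by
      rw [hB, ← hconsec 1]
      apply Finset.sum_congr rfl; intro j _; congr 1; omega
    have h2 : ∀ k ∈ Finset.range N, ((N : ℂ) + 1 - ((k : ℂ) + 1)) * χ ((k : ℤ) + 1)
        = ((N : ℂ) + 1) * χ ((k : ℤ) + 1) - ((k : ℂ) + 1) * χ ((k : ℤ) + 1) := fun k _ => by ring
    rw [h1, ← hA N, Finset.sum_congr rfl h2, Finset.sum_sub_distrib, ← Finset.mul_sum, hsum,
      mul_zero, zero_sub]
  set f : ℕ → ℂ := fun l => B l - l * (T / N) with hf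
  have fper : ∀ l : ℕ, f (l + N) = f l := by
    intro l
    have h1 : B (l + N) = B l + ∑ j ∈ Finset.range N, S (l + j + 1) :=
      Finset.sum_range_add (fun j => S (j + 1)) l N
    have h2 : ∑ j ∈ Finset.range N, S (l + j + 1) = T := by
      rw [← hconsec (l + 1)]
      apply Finset.sum_congr rfl; intro j _; congr 1; omega
    simp only [hf]
    rw [h1, h2]
    push_cast
    field_simp
    ring
  have fmod : ∀ l : ℕ, f l = f (l % N) := by
    intro l
    have key : ∀ q r : ℕ, f (r + q * N) = f r := by
      intro q
      induction q with
      | zero => intro r; simp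
      | succ q ih =>
        intro r
        rw [show r + (q + 1) * N = (r + q * N) + N by ring, fper, ih]
    conv_lhs => rw [← Nat.mod_add_div' l N]
    exact key (l / N) (l % N)
  set M : ℝ := ∑ r ∈ Finset.range N, ‖f r‖ with hM
  have fbound : ∀ l : ℕ, ‖f l‖ ≤ M := by
    intro l
    rw [fmod l]
    exact Finset.single_le_sum (fun r _ => norm_nonneg (f r))
      (Finset.mem_range.mpr (Nat.mod_lt l hN))
  have hzero : Tendsto (fun l : ℕ => f l / (l : ℂ)) atTop (nhds 0) := by
    apply squeeze_zero_norm (a := fun l : ℕ => M / (l : ℝ)) _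
      (tendsto_const_div_atTop_nhds_zero_nat M)
    intro l
    show ‖f l / (l : ℂ)‖ ≤ M / (l : ℝ)
    rw [norm_div, Complex.norm_natCast, div_eq_mul_inv, div_eq_mul_inv]
    exact mul_le_mul_of_nonneg_right (fbound l) (inv_nonneg.mpr (Nat.cast_nonneg l))
  have main : Tendsto (fun l : ℕ => T / N + f l / l) atTop (nhds (T / N + 0)) :=
    tendsto_const_nhds.add hzero
  rw [add_zero] at main
  have hLval : T / (N : ℂ) = -(1 / (N : ℂ)) * ∑ k ∈ Finset.range N, ((k : ℂ) + 1) * χ ((k : ℤ) + 1) := by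
    rw [hTval]; field_simp
  have heq : ∀ᶠ l : ℕ in atTop, T / N + f l / l = (1 / (l : ℂ)) *
      ∑ k ∈ Finset.range l, ((l : ℂ) + 1 - ((k : ℂ) + 1)) * χ ((k : ℤ) + 1) := by
    filter_upwards [eventually_ge_atTop 1] with l hl
    have hl0 : (l : ℂ) ≠ 0 := Nat.cast_ne_zero.mpr (by omega)
    rw [hA l]
    simp only [hf]
    field_simp
    ring
  rw [← hLval]
  exact main.congr' heq
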